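/- Let X be a real p×n matrix, let P be a real n×n symmetric idempotent matrix, let S = (1/n)·X·Xᵀ be the sample covariance and Σ̂ = (1/n)·X·P·Xᵀ. Then both S and Σ̂ are symmetric positive semidefinite, and for every i = 1,…,p the i-th largest eigenvalue (counted with multiplicity) of Σ̂ is less than or equal to the i-th largest eigenvalue of S; i.e., the Nyström covariance estimator shrinks every eigenvalue of the sample covariance toward zero. -/

import Mathlib

open Matrix

open Matrix Module Submodule
open scoped InnerProductSpace

variable {p : ℕ}

local notation "E" p => EuclideanSpace ℝ (Fin p)

lemma psd_smul_aux {m : Type*} [Fintype m] {M : Matrix m m ℝ} (h : M.PosSemidef) {c : ℝ}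
    (hc : 0 ≤ c) : (c • M).PosSemidef := by
  refine (posSemidef_iff_dotProduct_mulVec).2 ⟨?_, fun x => ?_⟩
  · unfold Matrix.IsHermitian at *
    rw [conjTranspose_smul, star_trivial, h.1]
  · rw [smul_mulVec, dotProduct_smul, smul_eq_mul]
    exact mul_nonneg hc (h.dotProduct_mulVec_nonneg x)

lemma inner_bzero {p : ℕ} (b : OrthonormalBasis (Fin p) ℝ (EuclideanSpace ℝ (Fin p)))
    {J : Set (Fin p)} {j : Fin p} (hj : j ∉ J) {v : EuclideanSpace ℝ (Fin p)}
    (hv : v ∈ Submodule.span ℝ (⇑b '' J)) : ⟪b j, v⟫_ℝ = 0 := by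
  have hle : Submodule.span ℝ (⇑b '' J) ≤ LinearMap.ker (innerSL ℝ (b j) : EuclideanSpace ℝ (Fin p) →ₗ[ℝ] ℝ) := by
    rw [Submodule.span_le]
    rintro _ ⟨i, hi, rfl⟩
    simp only [SetLike.mem_coe, LinearMap.mem_ker, ContinuousLinearMap.coe_coe, innerSL_apply_apply]
    exact b.orthonormal.2 (fun h => hj (h ▸ hi))
  exact hle hv

lemma toEuclideanLin_basis {A : Matrix (Fin p) (Fin p) ℝ} (hA : A.IsHermitian) (j : Fin p) :
    Matrix.toEuclideanLin A (hA.eigenvectorBasis j) =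
      hA.eigenvalues j • hA.eigenvectorBasis j := by
  rw [toEuclideanLin_apply]
  rw [show (hA.eigenvectorBasis j).ofLp = ⇑(hA.eigenvectorBasis j) from rfl,
    hA.mulVec_eigenvectorBasis]
  rfl

lemma quad_form_eq {A : Matrix (Fin p) (Fin p) ℝ} (hA : A.IsHermitian)
    (v : EuclideanSpace ℝ (Fin p)) :
    ⟪v, Matrix.toEuclideanLin A v⟫_ℝ =
      ∑ j, hA.eigenvalues j * (⟪hA.eigenvectorBasis j, v⟫_ℝ)^2 := by
  have hsym := (Matrix.isHermitian_iff_isSymmetric).1 hA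
  rw [← OrthonormalBasis.sum_inner_mul_inner hA.eigenvectorBasis]
  refine Finset.sum_congr rfl fun j _ => ?_
  rw [← hsym (hA.eigenvectorBasis j) v, toEuclideanLin_basis hA j, inner_smul_left,
    real_inner_comm v]
  simp [sq]; ring

lemma norm_sq_eq {p : ℕ} (b : OrthonormalBasis (Fin p) ℝ (EuclideanSpace ℝ (Fin p)))
    (v : EuclideanSpace ℝ (Fin p)) : ⟪v, v⟫_ℝ = ∑ j, (⟪b j, v⟫_ℝ)^2 := by
  rw [← OrthonormalBasis.sum_inner_mul_inner b v v]
  exact Finset.sum_congr rfl fun j _ => by rw [real_inner_comm v, sq]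

lemma psd_symm_idem {p n : ℕ} (X : Matrix (Fin p) (Fin n) ℝ) (Q : Matrix (Fin n) (Fin n) ℝ)
    (hQs : Qᵀ = Q) (hQi : Q * Q = Q) : (X * Q * Xᵀ).PosSemidef := by
  have key : X * Q * Xᵀ = (X * Q) * (X * Q)ᴴ := by
    rw [conjTranspose_eq_transpose_of_trivial, transpose_mul, hQs, ← Matrix.mul_assoc,
      Matrix.mul_assoc X Q Q, hQi]
  rw [key]
  exact posSemidef_self_mul_conjTranspose _

lemma weyl_mono {p : ℕ} {A B : Matrix (Fin p) (Fin p) ℝ} (hA : A.IsHermitian)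
    (hB : B.IsHermitian) (hBA : (B - A).PosSemidef) (k : Fin p) :
    (hA.eigenvalues ∘ ⇑(Tuple.sort hA.eigenvalues)) k ≤
      (hB.eigenvalues ∘ ⇑(Tuple.sort hB.eigenvalues)) k := by
  classical
  by_contra hcon
  push_neg at hcon
  set μ := (hA.eigenvalues ∘ ⇑(Tuple.sort hA.eigenvalues)) k with hμ
  set JA : Finset (Fin p) := Finset.univ.filter (fun j => μ ≤ hA.eigenvalues j) with hJAdef
  set JB : Finset (Fin p) := Finset.univ.filter (fun j => hB.eigenvalues j < μ) with hJBdef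
  have hJA : p - (k : ℕ) ≤ JA.card := by
    have hsub : (Finset.Ici k).image ⇑(Tuple.sort hA.eigenvalues) ⊆ JA := by
      intro j hj
      simp only [Finset.mem_image, Finset.mem_Ici] at hj
      obtain ⟨k', hk', rfl⟩ := hj
      simp only [hJAdef, Finset.mem_filter, Finset.mem_univ, true_and]
      exact Tuple.monotone_sort hA.eigenvalues hk'
    calc p - (k : ℕ) = (Finset.Ici k).card := (Fin.card_Ici k).symm
      _ = ((Finset.Ici k).image ⇑(Tuple.sort hA.eigenvalues)).card :=
          (Finset.card_image_of_injective _ (Equiv.injective _)).symm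
      _ ≤ JA.card := Finset.card_le_card hsub
  have hJB : (k : ℕ) + 1 ≤ JB.card := by
    have hsub : (Finset.Iic k).image ⇑(Tuple.sort hB.eigenvalues) ⊆ JB := by
      intro j hj
      simp only [Finset.mem_image, Finset.mem_Iic] at hj
      obtain ⟨k', hk', rfl⟩ := hj
      simp only [hJBdef, Finset.mem_filter, Finset.mem_univ, true_and]
      exact lt_of_le_of_lt (Tuple.monotone_sort hB.eigenvalues hk') hcon
    calc (k : ℕ) + 1 = (Finset.Iic k).card := (Fin.card_Iic k).symm
      _ = ((Finset.Iic k).image ⇑(Tuple.sort hB.eigenvalues)).card :=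
          (Finset.card_image_of_injective _ (Equiv.injective _)).symm
      _ ≤ JB.card := Finset.card_le_card hsub
  set bA := hA.eigenvectorBasis with hbA
  set bB := hB.eigenvectorBasis with hbB
  set VA := Submodule.span ℝ (⇑bA '' ↑JA) with hVA
  set VB := Submodule.span ℝ (⇑bB '' ↑JB) with hVB
  have liA : LinearIndependent ℝ (fun x : ↥(↑JA : Set (Fin p)) => bA ↑x) :=
    (bA.orthonormal.linearIndependent).comp _ Subtype.val_injective
  have liB : LinearIndependent ℝ (fun x : ↥(↑JB : Set (Fin p)) => bB ↑x) :=
    (bB.orthonormal.linearIndependent).comp _ Subtype.val_injective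
  have hfA : finrank ℝ VA = JA.card := by
    rw [hVA, Set.image_eq_range, finrank_span_eq_card liA]
    simp
  have hfB : finrank ℝ VB = JB.card := by
    rw [hVB, Set.image_eq_range, finrank_span_eq_card liB]
    simp
  have hinter : VA ⊓ VB ≠ ⊥ := by
    intro hbot
    have h1 := Submodule.finrank_sup_add_finrank_inf_eq VA VB
    rw [hbot, finrank_bot, add_zero, hfA, hfB] at h1
    have h2 : finrank ℝ ↥(VA ⊔ VB) ≤ p := by
      refine le_trans (Submodule.finrank_le _) ?_
      simp [finrank_euclideanSpace]
    have hk := k.isLt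
    omega
  obtain ⟨v, hvmem, hv0⟩ := Submodule.exists_mem_ne_zero_of_ne_bot hinter
  have hvA : v ∈ VA := hvmem.1
  have hvB : v ∈ VB := hvmem.2
  have hA_low : μ * ⟪v, v⟫_ℝ ≤ ⟪v, Matrix.toEuclideanLin A v⟫_ℝ := by
    rw [quad_form_eq hA, norm_sq_eq bA, Finset.mul_sum]
    refine Finset.sum_le_sum fun j _ => ?_
    by_cases hj : j ∈ JA
    · exact mul_le_mul_of_nonneg_right
        (by simpa [hJAdef] using (Finset.mem_filter.1 hj).2) (sq_nonneg _)
    · rw [inner_bzero bA (by simpa using hj) hvA]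
      simp
  have hvsupp : ∃ j₀, j₀ ∈ JB ∧ ⟪bB j₀, v⟫_ℝ ≠ 0 := by
    by_contra h
    push_neg at h
    apply hv0
    have hz : ⟪v, v⟫_ℝ = 0 := by
      rw [norm_sq_eq bB]
      refine Finset.sum_eq_zero fun j _ => ?_
      by_cases hj : j ∈ JB
      · rw [h j hj]; simp
      · rw [inner_bzero bB (by simpa using hj) hvB]; simp
    exact inner_self_eq_zero.mp hz
  obtain ⟨j₀, hj₀J, hj₀⟩ := hvsupp
  have hB_high : ⟪v, Matrix.toEuclideanLin B v⟫_ℝ < μ * ⟪v, v⟫_ℝ := by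
    rw [quad_form_eq hB, norm_sq_eq bB, Finset.mul_sum]
    refine Finset.sum_lt_sum (fun j _ => ?_) ⟨j₀, Finset.mem_univ _, ?_⟩
    · by_cases hj : j ∈ JB
      · exact mul_le_mul_of_nonneg_right
          (le_of_lt (by simpa [hJBdef] using (Finset.mem_filter.1 hj).2)) (sq_nonneg _)
      · rw [inner_bzero bB (by simpa using hj) hvB]; simp
    · exact mul_lt_mul_of_pos_right
        (by simpa [hJBdef] using (Finset.mem_filter.1 hj₀J).2) (sq_pos_iff.mpr hj₀)
  have hpsd : 0 ≤ ⟪v, Matrix.toEuclideanLin (B - A) v⟫_ℝ := by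
    rw [EuclideanSpace.inner_eq_star_dotProduct, toEuclideanLin_apply, WithLp.ofLp_toLp, dotProduct_comm]
    exact hBA.dotProduct_mulVec_nonneg (WithLp.ofLp v)
  rw [map_sub, LinearMap.sub_apply, inner_sub_right] at hpsd
  linarith

/-- Both the sample covariance `S = (1/n)·X·Xᵀ` and the Nyström covariance estimator
`Σ̂ = (1/n)·X·P·Xᵀ` (for a symmetric idempotent `P`) are positive semidefinite, and
each eigenvalue of `Σ̂` (in nonincreasing order, counted with multiplicity) is at most
the corresponding eigenvalue of `S`.  Here `Tuple.sort` arranges the eigenvalues in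
nondecreasing order, so `(· ∘ Tuple.sort ·) i.rev` is the `i`-th largest eigenvalue. -/
theorem nystrom_eigenvalue_shrinkage (p n : ℕ)
    (X : Matrix (Fin p) (Fin n) ℝ) (P : Matrix (Fin n) (Fin n) ℝ)
    (hPsymm : Pᵀ = P) (hPidem : P * P = P) :
    ((n : ℝ)⁻¹ • (X * Xᵀ)).PosSemidef ∧
    ((n : ℝ)⁻¹ • (X * P * Xᵀ)).PosSemidef ∧
    ∀ (hS : ((n : ℝ)⁻¹ • (X * Xᵀ)).IsHermitian)
      (hN : ((n : ℝ)⁻¹ • (X * P * Xᵀ)).IsHermitian) (i : Fin p),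
      (hN.eigenvalues ∘ ⇑(Tuple.sort hN.eigenvalues)) i.rev ≤
        (hS.eigenvalues ∘ ⇑(Tuple.sort hS.eigenvalues)) i.rev := by
  have hinv : (0 : ℝ) ≤ (n : ℝ)⁻¹ := inv_nonneg.2 (Nat.cast_nonneg n)
  have hQs : (1 - P)ᵀ = 1 - P := by rw [transpose_sub, transpose_one, hPsymm]
  have hQi : (1 - P) * (1 - P) = 1 - P := by
    rw [mul_sub, sub_mul, sub_mul, one_mul, mul_one, one_mul, hPidem]
    abel
  have hS0 : (X * Xᵀ).PosSemidef := by
    have := psd_symm_idem X 1 (transpose_one) (one_mul 1)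
    simpa using this
  have hN0 : (X * P * Xᵀ).PosSemidef := psd_symm_idem X P hPsymm hPidem
  have hD0 : (X * (1 - P) * Xᵀ).PosSemidef := psd_symm_idem X (1 - P) hQs hQi
  refine ⟨psd_smul_aux hS0 hinv, psd_smul_aux hN0 hinv, fun hS hN i => ?_⟩
  have hdiff : ((n : ℝ)⁻¹ • (X * Xᵀ) - (n : ℝ)⁻¹ • (X * P * Xᵀ)).PosSemidef := by
    have heq : (n : ℝ)⁻¹ • (X * Xᵀ) - (n : ℝ)⁻¹ • (X * P * Xᵀ)
        = (n : ℝ)⁻¹ • (X * (1 - P) * Xᵀ) := by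
      rw [← smul_sub]
      congr 1
      rw [Matrix.mul_sub, Matrix.mul_one, Matrix.sub_mul]
    rw [heq]
    exact psd_smul_aux hD0 hinv
  exact weyl_mono hN hS hdiff i.rev
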